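/- For any P > 0, h ∈ ℝ, and σ_w² ≥ 0, the equation (P/(1 + σ_w² h²)) ξ² (1 + |h| ξ)² = 1 − ξ² has a unique root ξ₀ in (0, 1), and ξ₀ is a strictly decreasing function of P. -/

import Mathlib

/-- For every `P > 0`, the quartic `(P/(1 + σ_w² h²)) ξ² (1 + |h| ξ)² = 1 - ξ²` has
exactly one root `ξ₀ ∈ (0,1)`, and that root is strictly decreasing in `P`. -/
theorem unique_root_awgn_relay_and_decreasing (h σw2 : ℝ) (hσw2 : 0 ≤ σw2) :
    (∀ P : ℝ, 0 < P →
      ∃! ξ : ℝ, ξ ∈ Set.Ioo (0 : ℝ) 1 ∧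
        (P / (1 + σw2 * h ^ 2)) * ξ ^ 2 * (1 + |h| * ξ) ^ 2 = 1 - ξ ^ 2)
    ∧ (∀ P₁ P₂ ξ₁ ξ₂ : ℝ, 0 < P₁ → P₁ < P₂ →
        ξ₁ ∈ Set.Ioo (0 : ℝ) 1 →
        (P₁ / (1 + σw2 * h ^ 2)) * ξ₁ ^ 2 * (1 + |h| * ξ₁) ^ 2 = 1 - ξ₁ ^ 2 →
        ξ₂ ∈ Set.Ioo (0 : ℝ) 1 →
        (P₂ / (1 + σw2 * h ^ 2)) * ξ₂ ^ 2 * (1 + |h| * ξ₂) ^ 2 = 1 - ξ₂ ^ 2 →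
        ξ₂ < ξ₁) := by
  set k := |h| with hk
  have hk0 : 0 ≤ k := abs_nonneg h
  have hD : (0:ℝ) < 1 + σw2 * h ^ 2 := by positivity
  constructor
  · intro P hP
    set c := P / (1 + σw2 * h ^ 2) with hc
    have hc0 : 0 < c := div_pos hP hD
    set F : ℝ → ℝ := fun ξ => c * ξ ^ 2 * (1 + k * ξ) ^ 2 + ξ ^ 2 with hF
    have hmono : StrictMonoOn F (Set.Icc 0 1) := by
      intro a ha b hb hab
      simp only [hF]
      have ha0 : 0 ≤ a := ha.1
      have hb0 : 0 < b := lt_of_le_of_lt ha0 hab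
      have hu0 : 0 ≤ a * (1 + k * a) :=
        mul_nonneg ha0 (by nlinarith [mul_nonneg hk0 ha0])
      have hsq' : a ^ 2 ≤ b ^ 2 := by nlinarith
      have huv : a * (1 + k * a) ≤ b * (1 + k * b) := by
        nlinarith [mul_nonneg hk0 (sub_nonneg.mpr hsq')]
      have hs : (a * (1 + k * a)) ^ 2 ≤ (b * (1 + k * b)) ^ 2 :=
        pow_le_pow_left₀ hu0 huv 2
      have hsq : a ^ 2 < b ^ 2 := by nlinarith
      have key : c * a ^ 2 * (1 + k * a) ^ 2 ≤ c * b ^ 2 * (1 + k * b) ^ 2 := by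
        calc c * a ^ 2 * (1 + k * a) ^ 2 = c * (a * (1 + k * a)) ^ 2 := by ring
          _ ≤ c * (b * (1 + k * b)) ^ 2 := by
              exact mul_le_mul_of_nonneg_left hs hc0.le
          _ = c * b ^ 2 * (1 + k * b) ^ 2 := by ring
      linarith
    have hcont : ContinuousOn F (Set.Icc 0 1) := by fun_prop
    have h0 : F 0 = 0 := by simp [hF]
    have h1 : 1 < F 1 := by
      have : 0 < c * (1 + k) ^ 2 := by positivity
      simp only [hF]; nlinarith
    have hmem : (1:ℝ) ∈ Set.Ioo (F 0) (F 1) := by rw [h0]; exact ⟨one_pos, h1⟩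
    obtain ⟨ξ, hξ, hFξ⟩ := intermediate_value_Ioo (by norm_num : (0:ℝ) ≤ 1) hcont hmem
    refine ⟨ξ, ⟨hξ, ?_⟩, ?_⟩
    · simp only [hF] at hFξ; linarith
    · rintro y ⟨hy, hyeq⟩
      apply hmono.injOn (Set.mem_Icc.mpr ⟨hy.1.le, hy.2.le⟩)
        (Set.mem_Icc.mpr ⟨hξ.1.le, hξ.2.le⟩)
      simp only [hF]
      simp only [hF] at hFξ
      linarith
  · intro P₁ P₂ ξ₁ ξ₂ hP1 hP12 hξ1 heq1 hξ2 heq2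
    by_contra hcon
    push_neg at hcon
    set c₁ := P₁ / (1 + σw2 * h ^ 2) with hc1
    set c₂ := P₂ / (1 + σw2 * h ^ 2) with hc2
    have hc10 : 0 < c₁ := div_pos hP1 hD
    have hc12 : c₁ < c₂ := by
      apply div_lt_div_of_pos_right hP12 hD
    have e1 : c₁ * (ξ₁ ^ 2 * (1 + k * ξ₁) ^ 2) = 1 - ξ₁ ^ 2 := by rw [← heq1]; ring
    have e2 : c₂ * (ξ₂ ^ 2 * (1 + k * ξ₂) ^ 2) = 1 - ξ₂ ^ 2 := by rw [← heq2]; ring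
    have hg1 : 0 < ξ₁ ^ 2 * (1 + k * ξ₁) ^ 2 := by
      have h1 : 0 < ξ₁ ^ 2 := pow_pos hξ1.1 2
      have h2 : 0 < (1 + k * ξ₁) ^ 2 :=
        pow_pos (by nlinarith [mul_nonneg hk0 hξ1.1.le]) 2
      exact mul_pos h1 h2
    have hgmono : ξ₁ ^ 2 * (1 + k * ξ₁) ^ 2 ≤ ξ₂ ^ 2 * (1 + k * ξ₂) ^ 2 := by
      have hu0 : 0 ≤ ξ₁ * (1 + k * ξ₁) :=
        mul_nonneg hξ1.1.le (by nlinarith [mul_nonneg hk0 hξ1.1.le])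
      have hsq' : ξ₁ ^ 2 ≤ ξ₂ ^ 2 := pow_le_pow_left₀ hξ1.1.le hcon 2
      have huv : ξ₁ * (1 + k * ξ₁) ≤ ξ₂ * (1 + k * ξ₂) := by
        nlinarith [mul_nonneg hk0 (sub_nonneg.mpr hsq')]
      have hs : (ξ₁ * (1 + k * ξ₁)) ^ 2 ≤ (ξ₂ * (1 + k * ξ₂)) ^ 2 :=
        pow_le_pow_left₀ hu0 huv 2
      rw [mul_pow, mul_pow] at hs
      exact hs
    have hA : c₂ * (ξ₁ ^ 2 * (1 + k * ξ₁) ^ 2) ≤ c₂ * (ξ₂ ^ 2 * (1 + k * ξ₂) ^ 2) :=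
      mul_le_mul_of_nonneg_left hgmono (hc10.trans hc12).le
    have hB : c₁ * (ξ₁ ^ 2 * (1 + k * ξ₁) ^ 2) < c₂ * (ξ₁ ^ 2 * (1 + k * ξ₁) ^ 2) :=
      mul_lt_mul_of_pos_right hc12 hg1
    have hsq : ξ₁ ^ 2 ≤ ξ₂ ^ 2 := pow_le_pow_left₀ hξ1.1.le hcon 2
    linarith
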